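/- Let p be a prime. For every invertible n×n matrix g over ℚ_p there exist invertible matrices k₁, k₂ over ℚ_p, all of whose entries and all of whose inverses' entries have norm at most 1 (i.e., k₁, k₂ ∈ GLₙ(ℤ_p)), and a monotone nondecreasing function a : Fin n → ℤ, such that g = k₁ · D · k₂, where D is the diagonal matrix with diagonal entries D_{ii} = p^{a i}. -/

import Mathlib

open Matrix

variable {p : ℕ} [Fact p.Prime]

private lemma mul_entry_le {ι κ μ : Type*} [Fintype κ] (A : Matrix ι κ ℚ_[p]) (B : Matrix κ μ ℚ_[p])
    (hA : ∀ i j, ‖A i j‖ ≤ 1) (hB : ∀ i j, ‖B i j‖ ≤ 1) (i : ι) (j : μ) : ‖(A * B) i j‖ ≤ 1 := by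
  rw [Matrix.mul_apply]
  refine IsUltrametricDist.norm_sum_le_of_forall_le_of_nonneg zero_le_one fun x _ => ?_
  rw [norm_mul]
  exact mul_le_one₀ (hA i x) (norm_nonneg _) (hB x j)

private def IsK {ι : Type*} [Fintype ι] [DecidableEq ι] (k : Matrix ι ι ℚ_[p]) : Prop :=
  IsUnit k.det ∧ (∀ i j, ‖k i j‖ ≤ 1) ∧ (∀ i j, ‖k⁻¹ i j‖ ≤ 1)

private lemma IsK.mul {ι : Type*} [Fintype ι] [DecidableEq ι] {A B : Matrix ι ι ℚ_[p]}
    (hA : IsK A) (hB : IsK B) : IsK (A * B) := by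
  obtain ⟨hA1, hA2, hA3⟩ := hA; obtain ⟨hB1, hB2, hB3⟩ := hB
  refine ⟨by rw [Matrix.det_mul]; exact hA1.mul hB1, mul_entry_le _ _ hA2 hB2, ?_⟩
  rw [Matrix.mul_inv_rev]
  exact mul_entry_le _ _ hB3 hA3

private lemma isK_of_right_inverse {ι : Type*} [Fintype ι] [DecidableEq ι]
    {A B : Matrix ι ι ℚ_[p]} (h : A * B = 1)
    (hA : ∀ i j, ‖A i j‖ ≤ 1) (hB : ∀ i j, ‖B i j‖ ≤ 1) : IsK A :=
  ⟨Matrix.isUnit_det_of_right_inverse h, hA, by rw [Matrix.inv_eq_right_inv h]; exact hB⟩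

private lemma perm_entry_le {ι : Type*} [Fintype ι] [DecidableEq ι] (f : Equiv.Perm ι) (i j : ι) :
    ‖(f.toPEquiv.toMatrix : Matrix ι ι ℚ_[p]) i j‖ ≤ 1 := by
  simp only [PEquiv.toMatrix, Matrix.of_apply]
  split <;> simp

private lemma isK_perm {ι : Type*} [Fintype ι] [DecidableEq ι] (f : Equiv.Perm ι) :
    IsK (f.toPEquiv.toMatrix : Matrix ι ι ℚ_[p]) := by
  refine isK_of_right_inverse (B := f.symm.toPEquiv.toMatrix) ?_ (perm_entry_le f)
    (perm_entry_le f.symm)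
  rw [← PEquiv.toMatrix_trans, ← Equiv.toPEquiv_trans, Equiv.self_trans_symm,
    Equiv.toPEquiv_refl, PEquiv.toMatrix_refl]

private lemma isK_one {ι : Type*} [Fintype ι] [DecidableEq ι] : IsK (1 : Matrix ι ι ℚ_[p]) := by
  refine isK_of_right_inverse (B := 1) (mul_one 1) ?_ ?_ <;>
  · intro i j
    rw [Matrix.one_apply]
    split <;> simp

private lemma isK_submatrix {ι κ : Type*} [Fintype ι] [DecidableEq ι] [Fintype κ] [DecidableEq κ]
    {A : Matrix ι ι ℚ_[p]} (hA : IsK A) (e : κ ≃ ι) : IsK (A.submatrix e e) := by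
  obtain ⟨h1, h2, h3⟩ := hA
  have hinv : (A.submatrix e e) * (A⁻¹.submatrix e e) = 1 := by
    rw [Matrix.submatrix_mul_equiv, Matrix.mul_nonsing_inv _ h1, Matrix.submatrix_one_equiv]
  exact isK_of_right_inverse hinv (fun i j => h2 _ _) (fun i j => h3 _ _)

section Elem

variable {ι : Type*} [Fintype ι] [DecidableEq ι]

private noncomputable def Ecol (i₀ : ι) (c : ι → ℚ_[p]) : Matrix ι ι ℚ_[p] :=
  Matrix.of fun i j => if j = i₀ then c i else if i = j then 1 else 0

private noncomputable def Frow (j₀ : ι) (r : ι → ℚ_[p]) : Matrix ι ι ℚ_[p] :=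
  Matrix.of fun i j => if i = j₀ then r j else if i = j then 1 else 0

private lemma Ecol_mul (i₀ : ι) (c : ι → ℚ_[p]) (hc : c i₀ = 1) (M : Matrix ι ι ℚ_[p]) :
    Ecol i₀ c * M = M + Matrix.of (fun i j => if i = i₀ then 0 else c i * M i₀ j) := by
  ext i j
  rw [Matrix.mul_apply, Matrix.add_apply, Matrix.of_apply]
  by_cases hi : i = i₀
  · have h : ∀ x, Ecol i₀ c i x * M x j = if x = i₀ then M x j else 0 := by
      intro x
      simp only [Ecol, Matrix.of_apply]
      split_ifs with h1 h2 <;> simp_all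
    rw [Finset.sum_congr rfl (fun x _ => h x),
      Finset.sum_ite_eq' Finset.univ i₀ (fun x => M x j)]
    simp [hi]
  · have h : ∀ x, Ecol i₀ c i x * M x j
        = (if x = i₀ then c i * M x j else 0) + (if i = x then M x j else 0) := by
      intro x
      simp only [Ecol, Matrix.of_apply]
      split_ifs with h1 h2 <;> simp_all
    rw [Finset.sum_congr rfl (fun x _ => h x), Finset.sum_add_distrib,
      Finset.sum_ite_eq' Finset.univ i₀ (fun x => c i * M x j),
      Finset.sum_ite_eq Finset.univ i (fun x => M x j)]
    simp [hi]
    ring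

private lemma mul_Frow (j₀ : ι) (r : ι → ℚ_[p]) (hr : r j₀ = 1) (M : Matrix ι ι ℚ_[p]) :
    M * Frow j₀ r = M + Matrix.of (fun i j => if j = j₀ then 0 else M i j₀ * r j) := by
  ext i j
  rw [Matrix.mul_apply, Matrix.add_apply, Matrix.of_apply]
  by_cases hj : j = j₀
  · have h : ∀ x, M i x * Frow j₀ r x j = if x = j₀ then M i x else 0 := by
      intro x
      simp only [Frow, Matrix.of_apply]
      split_ifs with h1 h2 <;> simp_all
    rw [Finset.sum_congr rfl (fun x _ => h x),
      Finset.sum_ite_eq' Finset.univ j₀ (fun x => M i x)]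
    simp [hj]
  · have h : ∀ x, M i x * Frow j₀ r x j
        = (if x = j₀ then M i x * r j else 0) + (if x = j then M i x else 0) := by
      intro x
      simp only [Frow, Matrix.of_apply]
      split_ifs with h1 h2 h3 <;> simp_all
    rw [Finset.sum_congr rfl (fun x _ => h x), Finset.sum_add_distrib,
      Finset.sum_ite_eq' Finset.univ j₀ (fun x => M i x * r j),
      Finset.sum_ite_eq' Finset.univ j (fun x => M i x)]
    simp [hj]
    ring

private lemma Ecol_mul_Ecol (i₀ : ι) (c : ι → ℚ_[p]) (hc : c i₀ = 1) :
    Ecol i₀ c * Ecol i₀ (fun i => if i = i₀ then 1 else -c i) = 1 := by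
  rw [Ecol_mul i₀ c hc]
  ext i j
  simp only [Matrix.add_apply, Matrix.of_apply, Ecol, Matrix.one_apply]
  by_cases hi : i = i₀ <;> by_cases hj : j = i₀ <;> split_ifs <;> simp_all

private lemma Frow_mul_Frow (j₀ : ι) (r : ι → ℚ_[p]) (hr : r j₀ = 1) :
    Frow j₀ (fun j => if j = j₀ then 1 else -r j) * Frow j₀ r = 1 := by
  rw [mul_Frow j₀ r hr]
  ext i j
  simp only [Matrix.add_apply, Matrix.of_apply, Frow, Matrix.one_apply]
  by_cases hi : i = j₀ <;> by_cases hj : j = j₀ <;> split_ifs <;> simp_all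

private lemma Frow_mul_Frow' (j₀ : ι) (r : ι → ℚ_[p]) (hr : r j₀ = 1) :
    Frow j₀ r * Frow j₀ (fun j => if j = j₀ then 1 else -r j) = 1 := by
  rw [mul_Frow j₀ (fun j => if j = j₀ then 1 else -r j) (if_pos rfl)]
  ext i j
  simp only [Matrix.add_apply, Matrix.of_apply, Frow, Matrix.one_apply]
  by_cases hi : i = j₀ <;> by_cases hj : j = j₀ <;> split_ifs <;> simp_all [hr]

private lemma isK_Ecol (i₀ : ι) (c : ι → ℚ_[p]) (hc : c i₀ = 1) (hn : ∀ i, ‖c i‖ ≤ 1) :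
    IsK (Ecol i₀ c) := by
  refine isK_of_right_inverse (Ecol_mul_Ecol i₀ c hc) ?_ ?_ <;>
  · intro i j
    simp only [Ecol, Matrix.of_apply]
    split_ifs <;> simp [hn i]

private lemma isK_Frow (j₀ : ι) (r : ι → ℚ_[p]) (hr : r j₀ = 1) (hn : ∀ j, ‖r j‖ ≤ 1) :
    IsK (Frow j₀ r) := by
  refine isK_of_right_inverse (Frow_mul_Frow' j₀ r hr) ?_ ?_ <;>
  · intro i j
    simp only [Frow, Matrix.of_apply]
    split_ifs <;> simp [hn j, hn i]

end Elem

private lemma core (N : ℕ) : ∀ (ι : Type) [Fintype ι] [DecidableEq ι], Fintype.card ι ≤ N →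
    ∀ (A : Matrix ι ι ℚ_[p]), IsUnit A.det →
    ∃ (k₁ k₂ : Matrix ι ι ℚ_[p]) (a : ι → ℤ), IsK k₁ ∧ IsK k₂ ∧
      A = k₁ * Matrix.diagonal (fun i => (p : ℚ_[p]) ^ (a i)) * k₂ := by
  induction N with
  | zero =>
    intro ι _ _ hcard A _
    haveI : IsEmpty ι := Fintype.card_eq_zero_iff.mp (Nat.le_zero.mp hcard)
    exact ⟨1, 1, 0, isK_one, isK_one, Subsingleton.elim _ _⟩
  | succ n ih =>
    intro ι _ _ hcard A hA
    rcases isEmpty_or_nonempty ι with hι | hι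
    · exact ⟨1, 1, 0, isK_one, isK_one, Subsingleton.elim _ _⟩
    -- pick the pivot: an entry of maximal norm
    obtain ⟨⟨i₀, j₀⟩, -, hmax⟩ := Finset.exists_max_image (Finset.univ : Finset (ι × ι))
      (fun q => ‖A q.1 q.2‖) ⟨(Classical.arbitrary ι, Classical.arbitrary ι), Finset.mem_univ _⟩
    have hmax' : ∀ i j, ‖A i j‖ ≤ ‖A i₀ j₀‖ := fun i j => hmax (i, j) (Finset.mem_univ _)
    have hα0 : A i₀ j₀ ≠ 0 := by
      intro h0
      have hz : A = 0 := by
        ext i j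
        have h := hmax' i j
        rw [h0, norm_zero] at h
        simpa using le_antisymm h (norm_nonneg _)
      rw [hz, Matrix.det_zero] at hA
      exact hA.ne_zero rfl
    have hαpos : (0:ℝ) < ‖A i₀ j₀‖ := norm_pos_iff.mpr hα0
    set α : ℚ_[p] := A i₀ j₀ with hαdef
    -- elementary column/row clearing matrices
    set c : ι → ℚ_[p] := fun i => A i j₀ / α with hcdef
    set r : ι → ℚ_[p] := fun j => A i₀ j / α with hrdef
    have hc : c i₀ = 1 := div_self hα0
    have hr : r j₀ = 1 := div_self hα0
    have hcn : ∀ i, ‖c i‖ ≤ 1 := by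
      intro i
      rw [hcdef]
      simp only []
      rw [norm_div, div_le_one hαpos]
      exact hmax' i j₀
    have hrn : ∀ j, ‖r j‖ ≤ 1 := by
      intro j
      rw [hrdef]
      simp only []
      rw [norm_div, div_le_one hαpos]
      exact hmax' i₀ j
    set c' : ι → ℚ_[p] := fun i => if i = i₀ then 1 else -c i with hc'def
    set r' : ι → ℚ_[p] := fun j => if j = j₀ then 1 else -r j with hr'def
    have hc' : c' i₀ = 1 := if_pos rfl
    have hr' : r' j₀ = 1 := if_pos rfl
    have hc'n : ∀ i, ‖c' i‖ ≤ 1 := by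
      intro i
      rw [hc'def]
      simp only []
      split_ifs <;> simp [hcn i]
    have hr'n : ∀ j, ‖r' j‖ ≤ 1 := by
      intro j
      rw [hr'def]
      simp only []
      split_ifs <;> simp [hrn j]
    have hKE : IsK (Ecol i₀ c) := isK_Ecol i₀ c hc hcn
    have hKF : IsK (Frow j₀ r) := isK_Frow j₀ r hr hrn
    have hKE' : IsK (Ecol i₀ c') := isK_Ecol i₀ c' hc' hc'n
    have hKF' : IsK (Frow j₀ r') := isK_Frow j₀ r' hr' hr'n
    -- the matrix with cleared row i₀ and column j₀
    set M : Matrix ι ι ℚ_[p] := Ecol i₀ c' * A * Frow j₀ r' with hMdef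
    have hAM : A = Ecol i₀ c * M * Frow j₀ r := by
      rw [hMdef]
      simp only [mul_assoc]
      rw [Frow_mul_Frow j₀ r hr, mul_one, ← mul_assoc, Ecol_mul_Ecol i₀ c hc, one_mul]
    -- entrywise description of M
    have hM : ∀ i j, M i j = if i = i₀ then (if j = j₀ then α else 0)
        else if j = j₀ then 0 else A i j - c i * A i₀ j := by
      intro i j
      rw [hMdef, Ecol_mul i₀ c' hc', mul_Frow j₀ r' hr']
      simp only [Matrix.add_apply, Matrix.of_apply]
      rcases eq_or_ne i i₀ with hi | hi <;> rcases eq_or_ne j j₀ with hj | hj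
      · subst hi; subst hj; simp [hαdef]
      · subst hi
        simp only [if_pos rfl, if_true, if_neg hj, hr'def, hcdef, hrdef, ← hαdef]
        field_simp
        ring
      · subst hj
        simp only [if_pos rfl, if_true, if_neg hi, hc'def, hcdef, hrdef, ← hαdef]
        field_simp
        ring
      · simp only [if_neg hi, if_neg hj, hc'def, hr'def, hcdef, hrdef, ← hαdef]
        field_simp
        ring
    -- permute columns so that the pivot sits on the diagonal
    set τ : Equiv.Perm ι := Equiv.swap i₀ j₀ with hτdef
    set T : Matrix ι ι ℚ_[p] := τ.toPEquiv.toMatrix with hTdef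
    have hTT : T * T = 1 := by
      rw [hTdef, ← PEquiv.toMatrix_trans, ← Equiv.toPEquiv_trans, hτdef, Equiv.swap_swap,
        Equiv.toPEquiv_refl, PEquiv.toMatrix_refl]
    set M' : Matrix ι ι ℚ_[p] := M * T with hM'def
    have hM'sub : M' = M.submatrix id τ := by
      rw [hM'def, hTdef, PEquiv.mul_toMatrix_toPEquiv, hτdef, Equiv.symm_swap]
    have hMM' : M = M' * T := by rw [hM'def, mul_assoc, hTT, mul_one]
    have hτi₀ : τ i₀ = j₀ := Equiv.swap_apply_left i₀ j₀
    have hτj : ∀ x, τ x = j₀ ↔ x = i₀ := fun x =>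
      ⟨fun h => τ.injective (by rw [h, hτi₀]), fun h => by rw [h, hτi₀]⟩
    have hM'00 : M' i₀ i₀ = α := by
      rw [hM'sub, Matrix.submatrix_apply, id_eq, hτi₀, hM i₀ j₀]
      simp
    have hM'row : ∀ j, j ≠ i₀ → M' i₀ j = 0 := by
      intro j hj
      rw [hM'sub, Matrix.submatrix_apply, id_eq, hM i₀ (τ j), if_pos rfl,
        if_neg ((not_congr (hτj j)).mpr hj)]
    have hM'col : ∀ i, i ≠ i₀ → M' i i₀ = 0 := by
      intro i hi
      rw [hM'sub, Matrix.submatrix_apply, id_eq, hτi₀, hM i j₀, if_neg hi, if_pos rfl]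
    -- block decomposition of M'
    haveI : Unique {x : ι // x = i₀} := ⟨⟨⟨i₀, rfl⟩⟩, fun a => Subtype.ext a.2⟩
    set e : {x : ι // x = i₀} ⊕ {x : ι // ¬ x = i₀} ≃ ι := Equiv.sumCompl (· = i₀) with hedef
    set C : Matrix {x : ι // ¬ x = i₀} {x : ι // ¬ x = i₀} ℚ_[p] :=
      Matrix.of (fun i j => M' i.1 j.1) with hCdef
    have hN : M'.submatrix e e = Matrix.fromBlocks (Matrix.of fun _ _ => α) 0 0 C := by
      ext i j
      rcases i with i | i <;> rcases j with j | j <;>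
        simp only [Matrix.submatrix_apply, hedef, Equiv.sumCompl_apply_inl,
          Equiv.sumCompl_apply_inr, Matrix.fromBlocks_apply₁₁, Matrix.fromBlocks_apply₁₂,
          Matrix.fromBlocks_apply₂₁, Matrix.fromBlocks_apply₂₂, Matrix.of_apply,
          Matrix.zero_apply]
      · rw [i.2, j.2, hM'00]
      · rw [i.2]; exact hM'row j.1 j.2
      · rw [j.2]; exact hM'col i.1 i.2
      · rw [hCdef, Matrix.of_apply]
    -- determinants
    have hdetT : IsUnit T.det := (isK_perm τ).1
    have hdetM : IsUnit M.det := by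
      rw [hMdef, Matrix.det_mul, Matrix.det_mul]
      exact (hKE'.1.mul hA).mul hKF'.1
    have hdetM' : IsUnit M'.det := by
      rw [hM'def, Matrix.det_mul]
      exact hdetM.mul hdetT
    have hdetC : IsUnit C.det := by
      have h := hdetM'
      rw [← Matrix.det_submatrix_equiv_self e, hN, Matrix.det_fromBlocks_zero₂₁] at h
      exact isUnit_of_mul_isUnit_right h
    have hcardC : Fintype.card {x : ι // ¬ x = i₀} ≤ n := by
      have h1 := Fintype.card_subtype_compl (fun x : ι => x = i₀)
      rw [Fintype.card_subtype_eq] at h1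
      have h2 : 1 ≤ Fintype.card ι := Fintype.card_pos
      omega
    obtain ⟨k₁', k₂', a', hk₁', hk₂', hCeq⟩ := ih _ hcardC C hdetC
    -- split the pivot into a unit and a power of p
    set v : ℤ := α.valuation with hvdef
    have hpne : (p : ℚ_[p]) ≠ 0 := Nat.cast_ne_zero.mpr (Fact.out : p.Prime).ne_zero
    have hpzne : (p : ℚ_[p]) ^ v ≠ 0 := zpow_ne_zero _ hpne
    set u : ℚ_[p] := α / (p : ℚ_[p]) ^ v with hudef
    have hrpne : ((p : ℝ)) ^ (-v) ≠ 0 := by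
      apply zpow_ne_zero
      exact_mod_cast (Fact.out : p.Prime).ne_zero
    have hu1 : ‖u‖ = 1 := by
      rw [hudef, norm_div, Padic.norm_eq_zpow_neg_valuation hα0, Padic.norm_p_zpow, ← hvdef,
        div_self hrpne]
    have hu0 : u ≠ 0 := by
      intro h
      rw [h, norm_zero] at hu1
      norm_num at hu1
    have huα : u * (p : ℚ_[p]) ^ v = α := by
      rw [hudef]
      exact div_mul_cancel₀ _ hpzne
    -- assemble the block matrices
    set K₁ : Matrix ({x : ι // x = i₀} ⊕ {x : ι // ¬ x = i₀})
        ({x : ι // x = i₀} ⊕ {x : ι // ¬ x = i₀}) ℚ_[p] :=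
      Matrix.fromBlocks (Matrix.of fun _ _ => u) 0 0 k₁' with hK₁def
    set K₂ : Matrix ({x : ι // x = i₀} ⊕ {x : ι // ¬ x = i₀})
        ({x : ι // x = i₀} ⊕ {x : ι // ¬ x = i₀}) ℚ_[p] :=
      Matrix.fromBlocks 1 0 0 k₂' with hK₂def
    set d : {x : ι // x = i₀} ⊕ {x : ι // ¬ x = i₀} → ℤ := Sum.elim (fun _ => v) a' with hddef
    have hcorner : (Matrix.of fun _ _ => u) * (Matrix.diagonal fun _ => (p:ℚ_[p]) ^ v)
        = (Matrix.of fun (_ : {x : ι // x = i₀}) (_ : {x : ι // x = i₀}) => α) := by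
      ext i j
      rw [Matrix.mul_apply, Fintype.sum_unique]
      have hij : i = j := Subsingleton.elim i j
      subst hij
      have hd : i = default := Subsingleton.elim i default
      subst hd
      rw [Matrix.of_apply, Matrix.of_apply, Matrix.diagonal_apply_eq]
      exact huα
    have hblock : M'.submatrix e e
        = K₁ * Matrix.diagonal (fun x => (p : ℚ_[p]) ^ (d x)) * K₂ := by
      have hfun : (fun x => (p : ℚ_[p]) ^ (d x))
          = Sum.elim (fun _ : {x : ι // x = i₀} => (p:ℚ_[p]) ^ v)
            (fun i => (p:ℚ_[p]) ^ (a' i)) := by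
        funext x
        rcases x with x | x <;> simp [hddef]
      rw [hN, hfun, ← Matrix.fromBlocks_diagonal, hK₁def, hK₂def,
        Matrix.fromBlocks_multiply, Matrix.fromBlocks_multiply]
      simp only [Matrix.mul_zero, Matrix.zero_mul, Matrix.mul_one, add_zero, zero_add]
      rw [hcorner, ← hCeq]
    -- K₁ and K₂ are integral units
    have hK₁K : IsK K₁ := by
      refine isK_of_right_inverse
        (B := Matrix.fromBlocks (Matrix.of fun _ _ => u⁻¹) 0 0 k₁'⁻¹) ?_ ?_ ?_
      · rw [hK₁def, Matrix.fromBlocks_multiply]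
        simp only [Matrix.mul_zero, Matrix.zero_mul, add_zero, zero_add]
        rw [Matrix.mul_nonsing_inv _ hk₁'.1]
        have h1 : (Matrix.of fun _ _ => u) * (Matrix.of fun _ _ => u⁻¹)
            = (1 : Matrix {x : ι // x = i₀} {x : ι // x = i₀} ℚ_[p]) := by
          ext i j
          rw [Matrix.mul_apply, Fintype.sum_unique]
          have hij : i = j := Subsingleton.elim i j
          subst hij
          rw [Matrix.of_apply, Matrix.of_apply, Matrix.one_apply_eq, mul_inv_cancel₀ hu0]
        rw [h1, Matrix.fromBlocks_one]
      · intro i j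
        rcases i with i | i <;> rcases j with j | j
        · simpa [hK₁def] using le_of_eq hu1
        · simp [hK₁def]
        · simp [hK₁def]
        · simpa [hK₁def] using hk₁'.2.1 i j
      · intro i j
        rcases i with i | i <;> rcases j with j | j
        · simp only [Matrix.fromBlocks_apply₁₁, Matrix.of_apply, norm_inv, hu1]
          norm_num
        · simp
        · simp
        · simpa using hk₁'.2.2 i j
    have hK₂K : IsK K₂ := by
      refine isK_of_right_inverse (B := Matrix.fromBlocks 1 0 0 k₂'⁻¹) ?_ ?_ ?_
      · rw [hK₂def, Matrix.fromBlocks_multiply]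
        simp only [Matrix.mul_zero, Matrix.zero_mul, add_zero, zero_add, Matrix.mul_one,
          Matrix.one_mul]
        rw [Matrix.mul_nonsing_inv _ hk₂'.1, Matrix.fromBlocks_one]
      · intro i j
        rcases i with i | i <;> rcases j with j | j
        · simp only [hK₂def, Matrix.fromBlocks_apply₁₁, Matrix.one_apply]
          split <;> simp
        · simp [hK₂def]
        · simp [hK₂def]
        · simpa [hK₂def] using hk₂'.2.1 i j
      · intro i j
        rcases i with i | i <;> rcases j with j | j
        · simp only [Matrix.fromBlocks_apply₁₁, Matrix.one_apply]
          split <;> simp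
        · simp
        · simp
        · simpa using hk₂'.2.2 i j
    -- pull everything back along e
    have hsub2 : (K₁.submatrix e.symm e.symm)
        * ((Matrix.diagonal fun x => (p : ℚ_[p]) ^ (d x)).submatrix e.symm e.symm)
        * (K₂.submatrix e.symm e.symm) = M' := by
      rw [Matrix.submatrix_mul_equiv K₁ _ e.symm e.symm e.symm,
        Matrix.submatrix_mul_equiv _ K₂ e.symm e.symm e.symm, ← hblock,
        Matrix.submatrix_submatrix]
      simp [Equiv.self_comp_symm]
    have hdiagsub : ((Matrix.diagonal fun x => (p : ℚ_[p]) ^ (d x)).submatrix e.symm e.symm)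
        = Matrix.diagonal (fun i : ι => (p : ℚ_[p]) ^ (d (e.symm i))) := by
      rw [Matrix.submatrix_diagonal_equiv]
      rfl
    refine ⟨Ecol i₀ c * K₁.submatrix e.symm e.symm,
      K₂.submatrix e.symm e.symm * T * Frow j₀ r, fun i => d (e.symm i),
      hKE.mul (isK_submatrix hK₁K e.symm),
      ((isK_submatrix hK₂K e.symm).mul (isK_perm τ)).mul hKF, ?_⟩
    rw [hAM, hMM', ← hsub2, hdiagsub]
    simp only [mul_assoc]



/-- Cartan decomposition for `GL(n, ℚ_p)`: every invertible matrix `g` over `ℚ_p` can be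
written as `g = k₁ * D * k₂` where `k₁, k₂ ∈ GLₙ(ℤ_p)` (all entries of `kᵢ` and `kᵢ⁻¹` have
norm at most 1) and `D` is diagonal with entries `p^(a i)` for a monotone `a : Fin n → ℤ`. -/
theorem stmt7 (p : ℕ) [Fact p.Prime] (n : ℕ)
    (g : Matrix (Fin n) (Fin n) ℚ_[p]) (hg : IsUnit g.det) :
    ∃ (k₁ k₂ : Matrix (Fin n) (Fin n) ℚ_[p]) (a : Fin n → ℤ),
      IsUnit k₁.det ∧ (∀ i j, ‖k₁ i j‖ ≤ 1) ∧ (∀ i j, ‖k₁⁻¹ i j‖ ≤ 1) ∧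
      IsUnit k₂.det ∧ (∀ i j, ‖k₂ i j‖ ≤ 1) ∧ (∀ i j, ‖k₂⁻¹ i j‖ ≤ 1) ∧
      Monotone a ∧
      g = k₁ * Matrix.diagonal (fun i => (p : ℚ_[p]) ^ (a i)) * k₂ := by
  obtain ⟨k₁, k₂, a, hk₁, hk₂, heq⟩ := core (p := p) n (Fin n) (Fintype.card_fin n).le g hg
  set σ : Equiv.Perm (Fin n) := Tuple.sort a with hσdef
  have hmono : Monotone (a ∘ σ) := Tuple.monotone_sort a
  have hdiag : Matrix.diagonal (fun i => (p:ℚ_[p]) ^ (a i))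
      = σ.symm.toPEquiv.toMatrix
        * Matrix.diagonal (fun i => (p:ℚ_[p]) ^ ((a ∘ σ) i)) * σ.toPEquiv.toMatrix := by
    rw [PEquiv.toMatrix_toPEquiv_mul, PEquiv.mul_toMatrix_toPEquiv, Matrix.submatrix_submatrix,
      Function.comp_id, Function.id_comp, Matrix.submatrix_diagonal_equiv]
    have h : ((fun i => (p:ℚ_[p]) ^ ((a ∘ σ) i)) ∘ ⇑σ.symm) = fun i => (p:ℚ_[p]) ^ (a i) := by
      funext i
      simp
    rw [h]
  have H1 := IsK.mul hk₁ (isK_perm σ.symm)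
  have H2 := IsK.mul (isK_perm σ) hk₂
  refine ⟨k₁ * σ.symm.toPEquiv.toMatrix, σ.toPEquiv.toMatrix * k₂, a ∘ σ,
    H1.1, H1.2.1, H1.2.2, H2.1, H2.2.1, H2.2.2, hmono, ?_⟩
  rw [heq, hdiag]
  simp only [mul_assoc]
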